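/- Let G = (V,E) be a finite graph, let y_1,...,y_n ≥ 0 be nonnegative reals assigned to the vertices, not all zero, and let α = (∑_i max_{j∼i} |y_j − y_i|) / (∑_i y_i). Then there exists a nonempty set S contained in the support {i : y_i > 0} whose vertex expansion satisfies |N(S)|/|S| ≤ α. -/

import Mathlib

/-- Supremum of `f` over a finite set, taken to be `0` when the set is empty. -/
noncomputable def supOrZero {ι : Type*} (s : Finset ι) (f : ι → ℝ) : ℝ :=
  if h : s.Nonempty then s.sup' h f else 0

theorem stmt_6 (n : ℕ) (G : SimpleGraph (Fin n)) [DecidableRel G.Adj]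
    (y : Fin n → ℝ) (hy : ∀ i, 0 ≤ y i) (hpos : 0 < ∑ i, y i) :
    ∃ S : Finset (Fin n), S.Nonempty ∧ (∀ i ∈ S, 0 < y i) ∧
      ((Finset.univ.filter fun w => w ∉ S ∧ ∃ u ∈ S, G.Adj u w).card : ℝ) / S.card
        ≤ (∑ i, supOrZero (G.neighborFinset i) fun j => |y j - y i|) / ∑ i, y i := by
  classical
  by_contra hcon
  push_neg at hcon
  set A : ℝ := ∑ i, supOrZero (G.neighborFinset i) fun j => |y j - y i| with hAdef
  set Y : ℝ := ∑ i, y i with hYdef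
  -- a vertex of positive value and a vertex of maximal value
  obtain ⟨ip, -, hip⟩ : ∃ i ∈ Finset.univ, (fun _ : Fin n => (0:ℝ)) i < y i := by
    apply Finset.exists_lt_of_sum_lt
    simpa using hpos
  obtain ⟨i0, -, hi0⟩ := Finset.exists_max_image Finset.univ y ⟨ip, Finset.mem_univ _⟩
  set M : ℝ := y i0 with hMdef
  have hM0 : 0 < M := lt_of_lt_of_le hip (hi0 ip (Finset.mem_univ _))
  -- the set of threshold values
  set T : Finset ℝ := insert 0 (Finset.image y Finset.univ) with hTdef
  have h0T : (0:ℝ) ∈ T := Finset.mem_insert_self _ _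
  have hyT : ∀ i, y i ∈ T :=
    fun i => Finset.mem_insert_of_mem (Finset.mem_image_of_mem y (Finset.mem_univ i))
  have hTnn : ∀ x ∈ T, 0 ≤ x := by
    intro x hx
    rcases Finset.mem_insert.1 hx with rfl | hx
    · exact le_refl 0
    · obtain ⟨i, -, rfl⟩ := Finset.mem_image.1 hx; exact hy i
  have hTle : ∀ x ∈ T, x ≤ M := by
    intro x hx
    rcases Finset.mem_insert.1 hx with rfl | hx
    · exact hM0.le
    · obtain ⟨i, -, rfl⟩ := Finset.mem_image.1 hx; exact hi0 i (Finset.mem_univ _)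
  set l : List ℝ := T.sort (· ≤ ·) with hldef
  have hsort : l.Pairwise (· < ·) := (Finset.sortedLT_sort T).pairwise
  have hmeml : ∀ {x : ℝ}, x ∈ l ↔ x ∈ T := fun {x} => Finset.mem_sort _
  set f : ℕ → ℝ := fun m => if h : m < l.length then l.get ⟨m, h⟩ else 0 with hfdef
  have hfget : ∀ {m : ℕ} (h : m < l.length), f m = l.get ⟨m, h⟩ := fun {m} h => dif_pos h
  have hfT : ∀ {m : ℕ}, m < l.length → f m ∈ T := by
    intro m h; rw [hfget h]; exact hmeml.1 (l.get_mem ⟨m, h⟩)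
  have hflt : ∀ {a b : ℕ}, a < l.length → b < l.length → (f a < f b ↔ a < b) := by
    intro a b ha hb
    rw [hfget ha, hfget hb]
    exact ⟨fun h => Fin.mk_lt_mk.1 (hsort.sortedLT.strictMono_get.lt_iff_lt.1 h),
           fun h => hsort.sortedLT.strictMono_get (Fin.mk_lt_mk.2 h)⟩
  have hidxlt : ∀ {x : ℝ}, x ∈ T → List.idxOf x l < l.length :=
    fun {x} hx => List.idxOf_lt_length_iff.2 (hmeml.2 hx)
  have hidxget : ∀ {x : ℝ} (hx : x ∈ T), f (List.idxOf x l) = x := by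
    intro x hx
    rw [hfget (hidxlt hx), List.get_eq_getElem]
    exact List.getElem_idxOf _
  have hMT : M ∈ T := hyT i0
  have hlen2 : 2 ≤ l.length := by
    rw [hldef, Finset.length_sort]
    exact Finset.one_lt_card.2 ⟨0, h0T, M, hMT, hM0.ne⟩
  set K : ℕ := l.length - 1 with hKdef
  have hK1 : 1 ≤ K := by omega
  have hKlt : K < l.length := by omega
  have hidxK : ∀ {x : ℝ}, x ∈ T → List.idxOf x l ≤ K := by
    intro x hx; have := hidxlt hx; omega
  have hfK : f K = M := by
    have hiM := hidxlt hMT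
    have hiMK : List.idxOf M l = K := by
      by_contra hne
      have hlt : List.idxOf M l < K := by omega
      have h2 := (hflt (by omega) hKlt).2 hlt
      rw [hidxget hMT] at h2
      exact absurd (hTle _ (hfT hKlt)) (not_le.2 h2)
    rw [← hiMK, hidxget hMT]
  have hf0 : f 0 = 0 := by
    have h0lt : (0:ℕ) < l.length := by omega
    have h1 : 0 ≤ f 0 := hTnn _ (hfT h0lt)
    have h2 : f 0 ≤ 0 := by
      have hi := hidxlt h0T
      rcases Nat.eq_zero_or_pos (List.idxOf (0:ℝ) l) with h | h
      · rw [← hidxget h0T, h]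
      · have := (hflt h0lt hi).2 h
        rw [hidxget h0T] at this; exact this.le
    linarith
  -- level sets
  set St : ℝ → Finset (Fin n) := fun t => Finset.univ.filter (fun i => t < y i) with hStdef
  -- interval identification for the inner sums
  have hfilter : ∀ x ∈ T, (Finset.range K).filter (fun m => f m < x)
      = Finset.range (List.idxOf x l) := by
    intro x hx
    ext m
    simp only [Finset.mem_filter, Finset.mem_range]
    constructor
    · rintro ⟨hmK, hlt⟩
      rw [← hidxget hx] at hlt
      exact (hflt (by omega) (hidxlt hx)).1 hlt
    · intro hm
      have hix := hidxlt hx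
      refine ⟨by have := hidxK hx; omega, ?_⟩
      rw [← hidxget hx]
      exact (hflt (by omega) hix).2 hm
  have hfilter2 : ∀ a ∈ T, ∀ b ∈ T, (Finset.range K).filter (fun m => a ≤ f m ∧ f m < b)
      = Finset.Ico (List.idxOf a l) (List.idxOf b l) := by
    intro a ha b hb
    ext m
    simp only [Finset.mem_filter, Finset.mem_range, Finset.mem_Ico]
    constructor
    · rintro ⟨hmK, hle, hlt⟩
      have hmlt : m < l.length := by omega
      constructor
      · by_contra hc
        push_neg at hc
        have h2 := (hflt hmlt (hidxlt ha)).2 hc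
        rw [hidxget ha] at h2
        exact absurd hle (not_le.2 h2)
      · rw [← hidxget hb] at hlt
        exact (hflt hmlt (hidxlt hb)).1 hlt
    · rintro ⟨hle, hlt⟩
      have hib := hidxlt hb
      have hmlt : m < l.length := by omega
      refine ⟨by have := hidxK hb; omega, ?_, ?_⟩
      · rcases Nat.eq_or_lt_of_le hle with h | h
        · rw [← h, hidxget ha]
        · have := (hflt (hidxlt ha) hmlt).2 h
          rw [hidxget ha] at this; exact this.le
      · rw [← hidxget hb]
        exact (hflt hmlt hib).2 hlt
  -- layer-cake identity for the total mass
  have sum1 : ∑ m ∈ Finset.range K, (f (m+1) - f m) * ((St (f m)).card : ℝ) = Y := by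
    have hcard : ∀ t : ℝ, ((St t).card : ℝ) = ∑ i, if t < y i then (1:ℝ) else 0 := by
      intro t
      rw [Finset.sum_boole, hStdef]
    calc ∑ m ∈ Finset.range K, (f (m+1) - f m) * ((St (f m)).card : ℝ)
        = ∑ m ∈ Finset.range K, ∑ i, (if f m < y i then f (m+1) - f m else 0) := by
          refine Finset.sum_congr rfl fun m _ => ?_
          rw [hcard, Finset.mul_sum]
          refine Finset.sum_congr rfl fun i _ => ?_
          by_cases h : f m < y i <;> simp [h]
      _ = ∑ i, ∑ m ∈ Finset.range K, (if f m < y i then f (m+1) - f m else 0) :=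
          Finset.sum_comm
      _ = ∑ i, y i := by
          refine Finset.sum_congr rfl fun i _ => ?_
          rw [← Finset.sum_filter, hfilter (y i) (hyT i), Finset.sum_range_sub f,
            hidxget (hyT i), hf0, sub_zero]
      _ = Y := hYdef.symm
  -- layer-cake bound for the boundary
  have sum2 : ∑ m ∈ Finset.range K, (f (m+1) - f m) *
      ((Finset.univ.filter fun w => w ∉ St (f m) ∧ ∃ u ∈ St (f m), G.Adj u w).card : ℝ) ≤ A := by
    have hcard : ∀ t : ℝ,
        (((Finset.univ.filter fun w => w ∉ St t ∧ ∃ u ∈ St t, G.Adj u w).card : ℝ))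
        = ∑ w, if (w ∉ St t ∧ ∃ u ∈ St t, G.Adj u w) then (1:ℝ) else 0 := by
      intro t; rw [Finset.sum_boole]
    calc ∑ m ∈ Finset.range K, (f (m+1) - f m) *
        ((Finset.univ.filter fun w => w ∉ St (f m) ∧ ∃ u ∈ St (f m), G.Adj u w).card : ℝ)
        = ∑ m ∈ Finset.range K, ∑ w,
            (if (w ∉ St (f m) ∧ ∃ u ∈ St (f m), G.Adj u w) then f (m+1) - f m else 0) := by
          refine Finset.sum_congr rfl fun m _ => ?_
          rw [hcard, Finset.mul_sum]
          refine Finset.sum_congr rfl fun w _ => ?_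
          by_cases h : (w ∉ St (f m) ∧ ∃ u ∈ St (f m), G.Adj u w) <;> simp [h]
      _ = ∑ w, ∑ m ∈ Finset.range K,
            (if (w ∉ St (f m) ∧ ∃ u ∈ St (f m), G.Adj u w) then f (m+1) - f m else 0) :=
          Finset.sum_comm
      _ ≤ ∑ w, supOrZero (G.neighborFinset w) (fun j => |y j - y w|) := by
          refine Finset.sum_le_sum fun w _ => ?_
          by_cases hnb : (G.neighborFinset w).Nonempty
          · obtain ⟨u0, hu0mem, hu0⟩ := Finset.exists_mem_eq_sup' hnb y
            have hadj0 : G.Adj u0 w := ((SimpleGraph.mem_neighborFinset G w u0).1 hu0mem).symm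
            set Mw : ℝ := (G.neighborFinset w).sup' hnb y with hMwdef
            have hMwT : Mw ∈ T := by rw [hu0]; exact hyT u0
            have hcond : ∀ t : ℝ,
                (w ∉ St t ∧ ∃ u ∈ St t, G.Adj u w) ↔ (y w ≤ t ∧ t < Mw) := by
              intro t
              constructor
              · rintro ⟨hw, u, huS, hadj⟩
                simp only [hStdef, Finset.mem_filter, Finset.mem_univ, true_and] at hw huS
                refine ⟨not_lt.1 hw, lt_of_lt_of_le huS ?_⟩
                exact Finset.le_sup' y ((SimpleGraph.mem_neighborFinset G w u).2 hadj.symm)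
              · rintro ⟨hle, hlt⟩
                refine ⟨?_, u0, ?_, hadj0⟩
                · simp only [hStdef, Finset.mem_filter, Finset.mem_univ, true_and]
                  exact not_lt.2 hle
                · simp only [hStdef, Finset.mem_filter, Finset.mem_univ, true_and]
                  rw [← hu0]; exact hlt
            have hsup : supOrZero (G.neighborFinset w) (fun j => |y j - y w|)
                = (G.neighborFinset w).sup' hnb (fun j => |y j - y w|) := dif_pos hnb
            have hsup_ge : |y u0 - y w| ≤ supOrZero (G.neighborFinset w) (fun j => |y j - y w|) := by
              rw [hsup]; exact Finset.le_sup' (fun j => |y j - y w|) hu0mem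
            calc ∑ m ∈ Finset.range K,
                (if (w ∉ St (f m) ∧ ∃ u ∈ St (f m), G.Adj u w) then f (m+1) - f m else 0)
                = ∑ m ∈ Finset.range K, (if (y w ≤ f m ∧ f m < Mw) then f (m+1) - f m else 0) := by
                  refine Finset.sum_congr rfl fun m _ => ?_
                  exact if_congr (hcond (f m)) rfl rfl
              _ = ∑ m ∈ Finset.Ico (List.idxOf (y w) l) (List.idxOf Mw l),
                    (f (m+1) - f m) := by
                  rw [← Finset.sum_filter, hfilter2 (y w) (hyT w) Mw hMwT]
              _ ≤ supOrZero (G.neighborFinset w) (fun j => |y j - y w|) := by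
                  rcases le_or_gt (List.idxOf (y w) l) (List.idxOf Mw l) with hab | hab
                  · have htel : ∑ m ∈ Finset.Ico (List.idxOf (y w) l) (List.idxOf Mw l),
                        (f (m+1) - f m) = Mw - y w := by
                      rw [Finset.sum_Ico_eq_sub _ hab, Finset.sum_range_sub f,
                        Finset.sum_range_sub f, hidxget hMwT, hidxget (hyT w)]
                      ring
                    rw [htel]
                    refine le_trans ?_ hsup_ge
                    rw [hu0]
                    exact le_trans (sub_le_sub_right (le_refl (y u0)) (y w)) (le_abs_self _)
                  · rw [Finset.Ico_eq_empty (by omega), Finset.sum_empty]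
                    exact le_trans (abs_nonneg (y u0 - y w)) hsup_ge
          · have hz : supOrZero (G.neighborFinset w) (fun j => |y j - y w|) = 0 := dif_neg hnb
            rw [hz]
            refine le_of_eq (Finset.sum_eq_zero fun m _ => ?_)
            rw [if_neg]
            rintro ⟨-, u, -, hadj⟩
            exact hnb ⟨u, (SimpleGraph.mem_neighborFinset G w u).2 hadj.symm⟩
      _ = A := hAdef.symm
  -- positivity of the gaps
  have hgpos : ∀ m ∈ Finset.range K, 0 < f (m+1) - f m := by
    intro m hm
    rw [Finset.mem_range] at hm
    have := (hflt (show m < l.length by omega) (show m+1 < l.length by omega)).2 (lt_add_one m)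
    linarith
  -- the contradiction hypothesis applied to each level set
  have hkey : ∀ m ∈ Finset.range K, (A / Y) * ((St (f m)).card : ℝ)
      < ((Finset.univ.filter fun w => w ∉ St (f m) ∧ ∃ u ∈ St (f m), G.Adj u w).card : ℝ) := by
    intro m hm
    rw [Finset.mem_range] at hm
    have hmlt : m < l.length := by omega
    have hfmM : f m < M := by rw [← hfK]; exact (hflt hmlt hKlt).2 (by omega)
    have hne : (St (f m)).Nonempty :=
      ⟨i0, by simp only [hStdef, Finset.mem_filter, Finset.mem_univ, true_and]; exact hfmM⟩
    have hfm0 : 0 ≤ f m := hTnn _ (hfT hmlt)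
    have hposS : ∀ i ∈ St (f m), 0 < y i := by
      intro i hi
      simp only [hStdef, Finset.mem_filter, Finset.mem_univ, true_and] at hi
      linarith
    have hc := hcon (St (f m)) hne hposS
    have hcardpos : (0:ℝ) < ((St (f m)).card : ℝ) := by
      exact_mod_cast Finset.card_pos.2 hne
    rw [lt_div_iff₀ hcardpos] at hc
    exact hc
  have h1 : A / Y * Y < A := by
    calc A / Y * Y
        = A / Y * ∑ m ∈ Finset.range K, (f (m+1) - f m) * ((St (f m)).card : ℝ) := by rw [sum1]
      _ = ∑ m ∈ Finset.range K, (f (m+1) - f m) * (A / Y * ((St (f m)).card : ℝ)) := by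
          rw [Finset.mul_sum]
          exact Finset.sum_congr rfl fun m _ => by ring
      _ < ∑ m ∈ Finset.range K, (f (m+1) - f m) *
            ((Finset.univ.filter fun w => w ∉ St (f m) ∧ ∃ u ∈ St (f m), G.Adj u w).card : ℝ) := by
          refine Finset.sum_lt_sum_of_nonempty ⟨0, Finset.mem_range.2 (by omega)⟩ fun m hm => ?_
          exact mul_lt_mul_of_pos_left (hkey m hm) (hgpos m hm)
      _ ≤ A := sum2
  rw [div_mul_cancel₀ A hpos.ne'] at h1
  exact lt_irrefl A h1
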